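/- Let H = 4P_1+P_2 (four isolated vertices together with one edge). For every black-and-white labelling ℓ of H, the bipartite complement of H with respect to ℓ contains an induced subgraph isomorphic to the cycle C_4 or an induced subgraph isomorphic to the star K_{1,4}; in particular, this bipartite complement does not belong to the class S. -/

import Mathlib

open SimpleGraph

/-- `B` is the black colour class of a black-and-white labelling of `H`:
every edge of `H` joins a vertex of `B` to a vertex outside `B`
(equivalently, `B` and its complement `Bᶜ` are both independent sets,
i.e. `(B, Bᶜ)` is a bipartition of `H` into two possibly empty independent sets). -/
def IsBWLabelling {V : Type*} (H : SimpleGraph V) (B : Set V) : Prop :=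
  ∀ ⦃u v : V⦄, H.Adj u v → (u ∈ B ↔ v ∉ B)

/-- `H` with black class `BH` is a labelled induced subgraph of `G` with black class `BG`:
there is an injective map preserving both adjacency and non-adjacency which maps
black vertices to black vertices and white vertices to white vertices. -/
def LabelledIndSubgraph {VH VG : Type*} (H : SimpleGraph VH) (BH : Set VH)
    (G : SimpleGraph VG) (BG : Set VG) : Prop :=
  ∃ f : VH → VG, Function.Injective f ∧
    (∀ u v : VH, H.Adj u v ↔ G.Adj (f u) (f v)) ∧
    (∀ u : VH, u ∈ BH ↔ f u ∈ BG)

/-- `G` is strongly `H^ℓ`-free, where `BH` is the black class of the labelling `ℓ`: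
there is no bipartition `(BG, BGᶜ)` of `G` such that `H^ℓ` is a labelled induced
subgraph of `(BG, BGᶜ, E_G)`. -/
def StronglyFree {VG VH : Type*} (G : SimpleGraph VG) (H : SimpleGraph VH)
    (BH : Set VH) : Prop :=
  ¬ ∃ BG : Set VG, IsBWLabelling G BG ∧ LabelledIndSubgraph H BH G BG

/-- `G` is weakly `H^ℓ`-free, where `BH` is the black class of the labelling `ℓ`:
it is not the case that `H^ℓ` is a labelled induced subgraph of `(BG, BGᶜ, E_G)`
for every bipartition `(BG, BGᶜ)` of `G`. -/
def WeaklyFree {VG VH : Type*} (G : SimpleGraph VG) (H : SimpleGraph VH)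
    (BH : Set VH) : Prop :=
  ¬ ∀ BG : Set VG, IsBWLabelling G BG → LabelledIndSubgraph H BH G BG

/-- `G` is `H`-free: `G` contains no induced subgraph isomorphic to `H`. -/
def HFree {VG VH : Type*} (G : SimpleGraph VG) (H : SimpleGraph VH) : Prop :=
  ¬ ∃ f : VH → VG, Function.Injective f ∧ ∀ u v : VH, H.Adj u v ↔ G.Adj (f u) (f v)

/-- The bipartite complement of `H` with respect to the black-and-white labelling
with black class `B`: a black vertex and a white vertex are adjacent if and only if
they are non-adjacent in `H`, and no two vertices of the same colour are adjacent. -/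
def bipComplement {V : Type*} (H : SimpleGraph V) (B : Set V) : SimpleGraph V :=
  SimpleGraph.fromRel (fun u v => u ∈ B ∧ v ∉ B ∧ ¬ H.Adj u v)

/-- The subdivided claw `S_{h,i,j}` (for `1 ≤ h ≤ i ≤ j`): the tree with one centre
vertex `0` of degree `3` and three paths attached to it, with leaves at distance
`h`, `i` and `j` from the centre. The vertices of the three paths are
`1, …, h`, `h+1, …, h+i` and `h+i+1, …, h+i+j`, respectively. -/
def subdividedClaw (h i j : ℕ) : SimpleGraph (Fin (h + i + j + 1)) :=
  SimpleGraph.fromRel (fun a b =>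
    (a.val = 0 ∧ (b.val = 1 ∨ b.val = h + 1 ∨ b.val = h + i + 1)) ∨
    (1 ≤ a.val ∧ b.val = a.val + 1 ∧
      (b.val ≤ h ∨ (h + 1 ≤ a.val ∧ b.val ≤ h + i) ∨
        (h + i + 1 ≤ a.val ∧ b.val ≤ h + i + j))))

/-- `H` belongs to the class `S`: every connected component of `H` is isomorphic
to a path `P_r` for some `r ≥ 1` or to a subdivided claw `S_{h,i,j}` for some
`1 ≤ h ≤ i ≤ j`. -/
def InClassS {V : Type*} (H : SimpleGraph V) : Prop :=
  ∀ c : H.ConnectedComponent,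
    (∃ r : ℕ, 1 ≤ r ∧ Nonempty ((H.induce c.supp) ≃g SimpleGraph.pathGraph r)) ∨
    (∃ h i j : ℕ, 1 ≤ h ∧ h ≤ i ∧ i ≤ j ∧
      Nonempty ((H.induce c.supp) ≃g subdividedClaw h i j))

/-- The graph `4P_1 + P_2`: vertices `0, 1, 2, 3` isolated, edge `45`. -/
def g4P1'P2 : SimpleGraph (Fin 6) := SimpleGraph.fromEdgeSet {s(4, 5)}

/-- The star `K_{1,4}`: centre `0` adjacent to the four leaves `1, 2, 3, 4`. -/
def gK14 : SimpleGraph (Fin 5) :=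
  SimpleGraph.fromEdgeSet {s(0, 1), s(0, 2), s(0, 3), s(0, 4)}

/- ### Auxiliary lemmas -/

lemma adjIff (B : Set (Fin 6)) (u v : Fin 6) :
    (bipComplement g4P1'P2 B).Adj u v ↔
      u ≠ v ∧ ¬(u = 4 ∧ v = 5) ∧ ¬(u = 5 ∧ v = 4) ∧ ¬(u ∈ B ↔ v ∈ B) := by
  simp only [bipComplement, fromRel_adj, g4P1'P2, fromEdgeSet_adj, Set.mem_singleton_iff,
    Sym2.eq_iff, ne_eq]
  tauto

lemma K14_adj (u v : Fin 5) :
    gK14.Adj u v ↔ ((u = 0 ∧ v ≠ 0) ∨ (v = 0 ∧ u ≠ 0)) := by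
  simp only [gK14, fromEdgeSet_adj, Set.mem_insert_iff, Set.mem_singleton_iff, Sym2.eq_iff, ne_eq]
  fin_cases u <;> fin_cases v <;> simp <;> decide

lemma embC4 {V : Type*} (G : SimpleGraph V) (a b c d : V)
    (hab : G.Adj a b) (hbc : G.Adj b c) (hcd : G.Adj c d) (hda : G.Adj d a)
    (hac : ¬ G.Adj a c) (hbd : ¬ G.Adj b d) (hac' : a ≠ c) (hbd' : b ≠ d) :
    Nonempty (SimpleGraph.cycleGraph 4 ↪g G) := by
  have h1 : a ≠ b := hab.ne
  have h2 : b ≠ c := hbc.ne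
  have h3 : c ≠ d := hcd.ne
  have h4 : d ≠ a := hda.ne
  refine ⟨⟨⟨![a, b, c, d], ?_⟩, ?_⟩⟩
  · intro x y hxy
    fin_cases x <;> fin_cases y <;> simp_all <;>
      first
        | rfl
        | (exact absurd hxy.symm (by assumption))
        | (exact absurd hxy (by assumption))
        | (exact absurd hxy.symm (Ne.symm (by assumption)))
        | (exact absurd hxy (Ne.symm (by assumption)))
  · intro x y
    fin_cases x <;> fin_cases y <;>
      simp only [Matrix.cons_val_zero, Matrix.cons_val_one, Matrix.head_cons, Matrix.cons_val_two,
        Matrix.tail_cons, Matrix.cons_val_three, Function.Embedding.coeFn_mk] <;>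
      first
        | (rw [iff_true_intro (by decide : (SimpleGraph.cycleGraph 4).Adj _ _)]
           first
             | exact iff_of_true hab trivial | exact iff_of_true hbc trivial
             | exact iff_of_true hcd trivial | exact iff_of_true hda trivial
             | exact iff_of_true hab.symm trivial | exact iff_of_true hbc.symm trivial
             | exact iff_of_true hcd.symm trivial | exact iff_of_true hda.symm trivial)
        | (rw [iff_false_intro (by decide : ¬ (SimpleGraph.cycleGraph 4).Adj _ _)]
           first
             | exact iff_of_false (G.irrefl) (fun hh => hh)
             | exact iff_of_false hac (fun hh => hh)
             | exact iff_of_false hbd (fun hh => hh)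
             | exact iff_of_false (fun hh => hac hh.symm) (fun hh => hh)
             | exact iff_of_false (fun hh => hbd hh.symm) (fun hh => hh))

set_option maxHeartbeats 1000000 in
lemma embK14 {V : Type*} (G : SimpleGraph V) (c l0 l1 l2 l3 : V)
    (h0 : G.Adj c l0) (h1 : G.Adj c l1) (h2 : G.Adj c l2) (h3 : G.Adj c l3)
    (n01 : ¬ G.Adj l0 l1) (n02 : ¬ G.Adj l0 l2) (n03 : ¬ G.Adj l0 l3)
    (n12 : ¬ G.Adj l1 l2) (n13 : ¬ G.Adj l1 l3) (n23 : ¬ G.Adj l2 l3)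
    (e01 : l0 ≠ l1) (e02 : l0 ≠ l2) (e03 : l0 ≠ l3)
    (e12 : l1 ≠ l2) (e13 : l1 ≠ l3) (e23 : l2 ≠ l3) :
    Nonempty (gK14 ↪g G) := by
  have d0 : c ≠ l0 := h0.ne
  have d1 : c ≠ l1 := h1.ne
  have d2 : c ≠ l2 := h2.ne
  have d3 : c ≠ l3 := h3.ne
  refine ⟨⟨⟨![c, l0, l1, l2, l3], ?_⟩, ?_⟩⟩
  · intro x y hxy
    fin_cases x <;> fin_cases y <;> simp_all <;>
      first
        | rfl
        | (exact absurd hxy.symm (by assumption))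
        | (exact absurd hxy (by assumption))
        | (exact absurd hxy.symm (Ne.symm (by assumption)))
        | (exact absurd hxy (Ne.symm (by assumption)))
  · intro x y
    fin_cases x <;> fin_cases y <;>
      simp only [Matrix.cons_val_zero, Matrix.cons_val_one, Matrix.head_cons, Matrix.cons_val_two,
        Matrix.tail_cons, Matrix.cons_val_three, Matrix.cons_val_four, Matrix.cons_val_fin_one,
        Function.Embedding.coeFn_mk, K14_adj] <;>
      first
        | (rw [iff_true_intro (by decide : ((_ = (0:Fin 5) ∧ _ ≠ (0:Fin 5)) ∨ _))]
           first
             | exact iff_of_true h0 trivial | exact iff_of_true h1 trivial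
             | exact iff_of_true h2 trivial | exact iff_of_true h3 trivial
             | exact iff_of_true h0.symm trivial | exact iff_of_true h1.symm trivial
             | exact iff_of_true h2.symm trivial | exact iff_of_true h3.symm trivial)
        | (rw [iff_false_intro (by decide : ¬ ((_ = (0:Fin 5) ∧ _ ≠ (0:Fin 5)) ∨ _))]
           first
             | exact iff_of_false (G.irrefl) (fun hh => hh)
             | exact iff_of_false n01 (fun hh => hh) | exact iff_of_false n02 (fun hh => hh)
             | exact iff_of_false n03 (fun hh => hh) | exact iff_of_false n12 (fun hh => hh)
             | exact iff_of_false n13 (fun hh => hh) | exact iff_of_false n23 (fun hh => hh)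
             | exact iff_of_false (fun hh => n01 hh.symm) (fun hh => hh)
             | exact iff_of_false (fun hh => n02 hh.symm) (fun hh => hh)
             | exact iff_of_false (fun hh => n03 hh.symm) (fun hh => hh)
             | exact iff_of_false (fun hh => n12 hh.symm) (fun hh => hh)
             | exact iff_of_false (fun hh => n13 hh.symm) (fun hh => hh)
             | exact iff_of_false (fun hh => n23 hh.symm) (fun hh => hh))

lemma claw_adj_imp {h i j : ℕ} {u v : Fin (h + i + j + 1)}
    (hadj : (subdividedClaw h i j).Adj u v) :
    (v.val = u.val + 1 ∧ v.val ≠ h + 1 ∧ v.val ≠ h + i + 1) ∨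
    (u.val = v.val + 1 ∧ u.val ≠ h + 1 ∧ u.val ≠ h + i + 1) ∨
    (u.val = 0 ∧ (v.val = 1 ∨ v.val = h + 1 ∨ v.val = h + i + 1)) ∨
    (v.val = 0 ∧ (u.val = 1 ∨ u.val = h + 1 ∨ u.val = h + i + 1)) := by
  rw [subdividedClaw, fromRel_adj] at hadj
  obtain ⟨hne, hrel⟩ := hadj
  omega

lemma pathGraph_no_K14 {r : ℕ} (x y1 y2 y3 y4 : Fin r)
    (h1 : (SimpleGraph.pathGraph r).Adj x y1) (h2 : (SimpleGraph.pathGraph r).Adj x y2)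
    (h3 : (SimpleGraph.pathGraph r).Adj x y3) (h4 : (SimpleGraph.pathGraph r).Adj x y4)
    (e12 : y1 ≠ y2) (e13 : y1 ≠ y3) (e14 : y1 ≠ y4)
    (e23 : y2 ≠ y3) (e24 : y2 ≠ y4) (e34 : y3 ≠ y4) : False := by
  rw [pathGraph_adj] at h1 h2 h3 h4
  have v12 : y1.val ≠ y2.val := fun hv => e12 (Fin.val_injective hv)
  have v13 : y1.val ≠ y3.val := fun hv => e13 (Fin.val_injective hv)
  have v14 : y1.val ≠ y4.val := fun hv => e14 (Fin.val_injective hv)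
  have v23 : y2.val ≠ y3.val := fun hv => e23 (Fin.val_injective hv)
  have v24 : y2.val ≠ y4.val := fun hv => e24 (Fin.val_injective hv)
  have v34 : y3.val ≠ y4.val := fun hv => e34 (Fin.val_injective hv)
  omega

lemma claw_no_K14 {h i j : ℕ} (x y1 y2 y3 y4 : Fin (h + i + j + 1))
    (h1 : (subdividedClaw h i j).Adj x y1) (h2 : (subdividedClaw h i j).Adj x y2)
    (h3 : (subdividedClaw h i j).Adj x y3) (h4 : (subdividedClaw h i j).Adj x y4)
    (e12 : y1 ≠ y2) (e13 : y1 ≠ y3) (e14 : y1 ≠ y4)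
    (e23 : y2 ≠ y3) (e24 : y2 ≠ y4) (e34 : y3 ≠ y4) : False := by
  have w1 : x.val ≠ y1.val := fun hv => h1.ne (Fin.val_injective hv)
  have w2 : x.val ≠ y2.val := fun hv => h2.ne (Fin.val_injective hv)
  have w3 : x.val ≠ y3.val := fun hv => h3.ne (Fin.val_injective hv)
  have w4 : x.val ≠ y4.val := fun hv => h4.ne (Fin.val_injective hv)
  have v12 : y1.val ≠ y2.val := fun hv => e12 (Fin.val_injective hv)
  have v13 : y1.val ≠ y3.val := fun hv => e13 (Fin.val_injective hv)
  have v14 : y1.val ≠ y4.val := fun hv => e14 (Fin.val_injective hv)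
  have v23 : y2.val ≠ y3.val := fun hv => e23 (Fin.val_injective hv)
  have v24 : y2.val ≠ y4.val := fun hv => e24 (Fin.val_injective hv)
  have v34 : y3.val ≠ y4.val := fun hv => e34 (Fin.val_injective hv)
  have c1 := claw_adj_imp h1
  have c2 := claw_adj_imp h2
  have c3 := claw_adj_imp h3
  have c4 := claw_adj_imp h4
  omega

lemma pathGraph_no_C4 {r : ℕ} (a b c d : Fin r)
    (hab : (SimpleGraph.pathGraph r).Adj a b) (hbc : (SimpleGraph.pathGraph r).Adj b c)
    (hcd : (SimpleGraph.pathGraph r).Adj c d) (hda : (SimpleGraph.pathGraph r).Adj d a)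
    (hac : a ≠ c) (hbd : b ≠ d) : False := by
  rw [pathGraph_adj] at hab hbc hcd hda
  have v1 : a.val ≠ c.val := fun hv => hac (Fin.val_injective hv)
  have v2 : b.val ≠ d.val := fun hv => hbd (Fin.val_injective hv)
  omega

lemma claw_no_C4 {h i j : ℕ} (a b c d : Fin (h + i + j + 1))
    (hab : (subdividedClaw h i j).Adj a b) (hbc : (subdividedClaw h i j).Adj b c)
    (hcd : (subdividedClaw h i j).Adj c d) (hda : (subdividedClaw h i j).Adj d a)
    (hac : a ≠ c) (hbd : b ≠ d) : False := by
  have v1 : a.val ≠ c.val := fun hv => hac (Fin.val_injective hv)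
  have v2 : b.val ≠ d.val := fun hv => hbd (Fin.val_injective hv)
  have w1 : a.val ≠ b.val := fun hv => hab.ne (Fin.val_injective hv)
  have w2 : b.val ≠ c.val := fun hv => hbc.ne (Fin.val_injective hv)
  have w3 : c.val ≠ d.val := fun hv => hcd.ne (Fin.val_injective hv)
  have w4 : d.val ≠ a.val := fun hv => hda.ne (Fin.val_injective hv)
  have c1 := claw_adj_imp hab
  have c2 := claw_adj_imp hbc
  have c3 := claw_adj_imp hcd
  have c4 := claw_adj_imp hda
  omega

lemma not_inClassS_of_K14 {V : Type*} {G : SimpleGraph V} (f : gK14 ↪g G) :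
    ¬ InClassS G := by
  intro hS
  set c := G.connectedComponentMk (f 0) with hc
  have hadjf : ∀ u : Fin 5, u ≠ 0 → G.Adj (f 0) (f u) := by
    intro u hu
    rw [f.map_adj_iff, K14_adj]
    exact Or.inl ⟨rfl, hu⟩
  have hmem : ∀ u : Fin 5, f u ∈ c.supp := by
    intro u
    rw [SimpleGraph.ConnectedComponent.mem_supp_iff]
    by_cases hu : u = 0
    · rw [hu, hc]
    · exact (SimpleGraph.ConnectedComponent.sound (hadjf u hu).symm.reachable).trans rfl
  let a : Fin 5 → c.supp := fun u => ⟨f u, hmem u⟩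
  have ainj : Function.Injective a := fun u v huv =>
    f.injective (Subtype.ext_iff.mp huv)
  have hadj : ∀ u v : Fin 5, (G.induce c.supp).Adj (a u) (a v) ↔ gK14.Adj u v := by
    intro u v
    simp only [comap_adj, Function.Embedding.coe_subtype, a]
    exact f.map_adj_iff
  rcases hS c with ⟨r, _, ⟨e⟩⟩ | ⟨h, i, j, _, _, _, ⟨e⟩⟩
  · refine pathGraph_no_K14 (e (a 0)) (e (a 1)) (e (a 2)) (e (a 3)) (e (a 4)) ?_ ?_ ?_ ?_
      ?_ ?_ ?_ ?_ ?_ ?_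
    · exact e.map_adj_iff.mpr ((hadj 0 1).mpr (by rw [K14_adj]; decide))
    · exact e.map_adj_iff.mpr ((hadj 0 2).mpr (by rw [K14_adj]; decide))
    · exact e.map_adj_iff.mpr ((hadj 0 3).mpr (by rw [K14_adj]; decide))
    · exact e.map_adj_iff.mpr ((hadj 0 4).mpr (by rw [K14_adj]; decide))
    all_goals exact fun hh => absurd (ainj (e.toEquiv.injective hh)) (by decide)
  · refine claw_no_K14 (e (a 0)) (e (a 1)) (e (a 2)) (e (a 3)) (e (a 4)) ?_ ?_ ?_ ?_
      ?_ ?_ ?_ ?_ ?_ ?_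
    · exact e.map_adj_iff.mpr ((hadj 0 1).mpr (by rw [K14_adj]; decide))
    · exact e.map_adj_iff.mpr ((hadj 0 2).mpr (by rw [K14_adj]; decide))
    · exact e.map_adj_iff.mpr ((hadj 0 3).mpr (by rw [K14_adj]; decide))
    · exact e.map_adj_iff.mpr ((hadj 0 4).mpr (by rw [K14_adj]; decide))
    all_goals exact fun hh => absurd (ainj (e.toEquiv.injective hh)) (by decide)

lemma not_inClassS_of_C4 {V : Type*} {G : SimpleGraph V}
    (f : SimpleGraph.cycleGraph 4 ↪g G) : ¬ InClassS G := by
  intro hS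
  set c := G.connectedComponentMk (f 0) with hc
  have hadjf : ∀ u v : Fin 4, (SimpleGraph.cycleGraph 4).Adj u v → G.Adj (f u) (f v) := by
    intro u v huv
    exact f.map_adj_iff.mpr huv
  have hmem : ∀ u : Fin 4, f u ∈ c.supp := by
    intro u
    rw [SimpleGraph.ConnectedComponent.mem_supp_iff]
    fin_cases u
    · rfl
    · exact (SimpleGraph.ConnectedComponent.sound
        (hadjf 1 0 (by decide)).reachable).trans rfl
    · refine (SimpleGraph.ConnectedComponent.sound ?_).trans rfl
      exact ((hadjf 2 1 (by decide)).reachable).trans (hadjf 1 0 (by decide)).reachable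
    · exact (SimpleGraph.ConnectedComponent.sound (hadjf 3 0 (by decide)).reachable).trans rfl
  let a : Fin 4 → c.supp := fun u => ⟨f u, hmem u⟩
  have ainj : Function.Injective a := fun u v huv =>
    f.injective (Subtype.ext_iff.mp huv)
  have hadj : ∀ u v : Fin 4, (G.induce c.supp).Adj (a u) (a v) ↔
      (SimpleGraph.cycleGraph 4).Adj u v := by
    intro u v
    simp only [comap_adj, Function.Embedding.coe_subtype, a]
    exact f.map_adj_iff
  rcases hS c with ⟨r, _, ⟨e⟩⟩ | ⟨h, i, j, _, _, _, ⟨e⟩⟩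
  · refine pathGraph_no_C4 (e (a 0)) (e (a 1)) (e (a 2)) (e (a 3)) ?_ ?_ ?_ ?_ ?_ ?_
    · exact e.map_adj_iff.mpr ((hadj 0 1).mpr (by decide))
    · exact e.map_adj_iff.mpr ((hadj 1 2).mpr (by decide))
    · exact e.map_adj_iff.mpr ((hadj 2 3).mpr (by decide))
    · exact e.map_adj_iff.mpr ((hadj 3 0).mpr (by decide))
    · exact fun hh => absurd (ainj (e.toEquiv.injective hh)) (by decide)
    · exact fun hh => absurd (ainj (e.toEquiv.injective hh)) (by decide)
  · refine claw_no_C4 (e (a 0)) (e (a 1)) (e (a 2)) (e (a 3)) ?_ ?_ ?_ ?_ ?_ ?_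
    · exact e.map_adj_iff.mpr ((hadj 0 1).mpr (by decide))
    · exact e.map_adj_iff.mpr ((hadj 1 2).mpr (by decide))
    · exact e.map_adj_iff.mpr ((hadj 2 3).mpr (by decide))
    · exact e.map_adj_iff.mpr ((hadj 3 0).mpr (by decide))
    · exact fun hh => absurd (ainj (e.toEquiv.injective hh)) (by decide)
    · exact fun hh => absurd (ainj (e.toEquiv.injective hh)) (by decide)

lemma flipIff {a b : Prop} (h : ¬(a ↔ b)) : a ↔ ¬b := by tauto

lemma flipIff2 {a b : Prop} (h : a ↔ ¬b) : b ↔ ¬a := by tauto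

lemma nIff {a b t : Prop} (ha : a ↔ t) (hb : b ↔ ¬t) : ¬(a ↔ b) :=
  fun h => iff_not_self ((ha.symm.trans h).trans hb)

lemma nIff' {a b t : Prop} (ha : a ↔ ¬t) (hb : b ↔ t) : ¬(a ↔ b) :=
  fun h => nIff hb ha h.symm

lemma smeIff {a b t : Prop} (ha : a ↔ t) (hb : b ↔ t) : a ↔ b := ha.trans hb.symm

set_option maxHeartbeats 1000000 in
/-- For every black-and-white labelling of `4P_1 + P_2`, the bipartite complement
of `4P_1 + P_2` with respect to it contains an induced subgraph isomorphic to the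
cycle `C_4` or an induced subgraph isomorphic to the star `K_{1,4}`; in particular,
this bipartite complement does not belong to the class `S`. -/
theorem stmt_12 (B : Set (Fin 6)) (hB : IsBWLabelling g4P1'P2 B) :
    (Nonempty (SimpleGraph.cycleGraph 4 ↪g bipComplement g4P1'P2 B) ∨
      Nonempty (gK14 ↪g bipComplement g4P1'P2 B)) ∧
    ¬ InClassS (bipComplement g4P1'P2 B) := by
  have h45 : (4 : Fin 6) ∈ B ↔ (5 : Fin 6) ∉ B := by
    apply hB
    rw [g4P1'P2, fromEdgeSet_adj]
    exact ⟨Set.mem_singleton _, by decide⟩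
  have key : Nonempty (SimpleGraph.cycleGraph 4 ↪g bipComplement g4P1'P2 B) ∨
      Nonempty (gK14 ↪g bipComplement g4P1'P2 B) := by
    set G := bipComplement g4P1'P2 B with hG
    have adj : ∀ u v : Fin 6, u ≠ v → ¬(u = 4 ∧ v = 5) → ¬(u = 5 ∧ v = 4) →
        ¬(u ∈ B ↔ v ∈ B) → G.Adj u v := by
      intro u v a1 a2 a3 a4
      rw [hG, adjIff]
      exact ⟨a1, a2, a3, a4⟩
    have nadj : ∀ u v : Fin 6, (u ∈ B ↔ v ∈ B) → ¬ G.Adj u v := by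
      intro u v hcol hA
      rw [hG, adjIff] at hA
      exact hA.2.2.2 hcol
    have h5 : ((5 : Fin 6) ∈ B ↔ ¬ ((4 : Fin 6) ∈ B)) := flipIff2 h45
    by_cases s0 : ((0 : Fin 6) ∈ B ↔ (4 : Fin 6) ∈ B) <;>
    by_cases s1 : ((1 : Fin 6) ∈ B ↔ (4 : Fin 6) ∈ B) <;>
    by_cases s2 : ((2 : Fin 6) ∈ B ↔ (4 : Fin 6) ∈ B) <;>
    by_cases s3 : ((3 : Fin 6) ∈ B ↔ (4 : Fin 6) ∈ B)
    · exact Or.inr (embK14 G 5 0 1 2 3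
        (adj 5 0 (by decide) (by decide) (by decide) (nIff' h5 s0))
        (adj 5 1 (by decide) (by decide) (by decide) (nIff' h5 s1))
        (adj 5 2 (by decide) (by decide) (by decide) (nIff' h5 s2))
        (adj 5 3 (by decide) (by decide) (by decide) (nIff' h5 s3))
        (nadj 0 1 (smeIff s0 s1))
        (nadj 0 2 (smeIff s0 s2))
        (nadj 0 3 (smeIff s0 s3))
        (nadj 1 2 (smeIff s1 s2))
        (nadj 1 3 (smeIff s1 s3))
        (nadj 2 3 (smeIff s2 s3))
        (by decide) (by decide) (by decide) (by decide) (by decide) (by decide))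
    · exact Or.inl (embC4 G 0 3 1 5
        (adj 0 3 (by decide) (by decide) (by decide) (nIff s0 (flipIff s3)))
        (adj 3 1 (by decide) (by decide) (by decide) (nIff' (flipIff s3) s1))
        (adj 1 5 (by decide) (by decide) (by decide) (nIff s1 h5))
        (adj 5 0 (by decide) (by decide) (by decide) (nIff' h5 s0))
        (nadj 0 1 (smeIff s0 s1)) (nadj 3 5 (smeIff (flipIff s3) h5)) (by decide) (by decide))
    · exact Or.inl (embC4 G 0 2 1 5
        (adj 0 2 (by decide) (by decide) (by decide) (nIff s0 (flipIff s2)))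
        (adj 2 1 (by decide) (by decide) (by decide) (nIff' (flipIff s2) s1))
        (adj 1 5 (by decide) (by decide) (by decide) (nIff s1 h5))
        (adj 5 0 (by decide) (by decide) (by decide) (nIff' h5 s0))
        (nadj 0 1 (smeIff s0 s1)) (nadj 2 5 (smeIff (flipIff s2) h5)) (by decide) (by decide))
    · exact Or.inl (embC4 G 0 2 1 3
        (adj 0 2 (by decide) (by decide) (by decide) (nIff s0 (flipIff s2)))
        (adj 2 1 (by decide) (by decide) (by decide) (nIff' (flipIff s2) s1))
        (adj 1 3 (by decide) (by decide) (by decide) (nIff s1 (flipIff s3)))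
        (adj 3 0 (by decide) (by decide) (by decide) (nIff' (flipIff s3) s0))
        (nadj 0 1 (smeIff s0 s1)) (nadj 2 3 (smeIff (flipIff s2) (flipIff s3))) (by decide) (by decide))
    · exact Or.inl (embC4 G 0 1 2 5
        (adj 0 1 (by decide) (by decide) (by decide) (nIff s0 (flipIff s1)))
        (adj 1 2 (by decide) (by decide) (by decide) (nIff' (flipIff s1) s2))
        (adj 2 5 (by decide) (by decide) (by decide) (nIff s2 h5))
        (adj 5 0 (by decide) (by decide) (by decide) (nIff' h5 s0))
        (nadj 0 2 (smeIff s0 s2)) (nadj 1 5 (smeIff (flipIff s1) h5)) (by decide) (by decide))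
    · exact Or.inl (embC4 G 0 1 2 3
        (adj 0 1 (by decide) (by decide) (by decide) (nIff s0 (flipIff s1)))
        (adj 1 2 (by decide) (by decide) (by decide) (nIff' (flipIff s1) s2))
        (adj 2 3 (by decide) (by decide) (by decide) (nIff s2 (flipIff s3)))
        (adj 3 0 (by decide) (by decide) (by decide) (nIff' (flipIff s3) s0))
        (nadj 0 2 (smeIff s0 s2)) (nadj 1 3 (smeIff (flipIff s1) (flipIff s3))) (by decide) (by decide))
    · exact Or.inl (embC4 G 0 1 3 2
        (adj 0 1 (by decide) (by decide) (by decide) (nIff s0 (flipIff s1)))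
        (adj 1 3 (by decide) (by decide) (by decide) (nIff' (flipIff s1) s3))
        (adj 3 2 (by decide) (by decide) (by decide) (nIff s3 (flipIff s2)))
        (adj 2 0 (by decide) (by decide) (by decide) (nIff' (flipIff s2) s0))
        (nadj 0 3 (smeIff s0 s3)) (nadj 1 2 (smeIff (flipIff s1) (flipIff s2))) (by decide) (by decide))
    · exact Or.inl (embC4 G 0 1 4 2
        (adj 0 1 (by decide) (by decide) (by decide) (nIff s0 (flipIff s1)))
        (adj 1 4 (by decide) (by decide) (by decide) (nIff' (flipIff s1) Iff.rfl))
        (adj 4 2 (by decide) (by decide) (by decide) (nIff Iff.rfl (flipIff s2)))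
        (adj 2 0 (by decide) (by decide) (by decide) (nIff' (flipIff s2) s0))
        (nadj 0 4 (smeIff s0 Iff.rfl)) (nadj 1 2 (smeIff (flipIff s1) (flipIff s2))) (by decide) (by decide))
    · exact Or.inl (embC4 G 1 0 2 5
        (adj 1 0 (by decide) (by decide) (by decide) (nIff s1 (flipIff s0)))
        (adj 0 2 (by decide) (by decide) (by decide) (nIff' (flipIff s0) s2))
        (adj 2 5 (by decide) (by decide) (by decide) (nIff s2 h5))
        (adj 5 1 (by decide) (by decide) (by decide) (nIff' h5 s1))
        (nadj 1 2 (smeIff s1 s2)) (nadj 0 5 (smeIff (flipIff s0) h5)) (by decide) (by decide))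
    · exact Or.inl (embC4 G 1 0 2 3
        (adj 1 0 (by decide) (by decide) (by decide) (nIff s1 (flipIff s0)))
        (adj 0 2 (by decide) (by decide) (by decide) (nIff' (flipIff s0) s2))
        (adj 2 3 (by decide) (by decide) (by decide) (nIff s2 (flipIff s3)))
        (adj 3 1 (by decide) (by decide) (by decide) (nIff' (flipIff s3) s1))
        (nadj 1 2 (smeIff s1 s2)) (nadj 0 3 (smeIff (flipIff s0) (flipIff s3))) (by decide) (by decide))
    · exact Or.inl (embC4 G 1 0 3 2
        (adj 1 0 (by decide) (by decide) (by decide) (nIff s1 (flipIff s0)))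
        (adj 0 3 (by decide) (by decide) (by decide) (nIff' (flipIff s0) s3))
        (adj 3 2 (by decide) (by decide) (by decide) (nIff s3 (flipIff s2)))
        (adj 2 1 (by decide) (by decide) (by decide) (nIff' (flipIff s2) s1))
        (nadj 1 3 (smeIff s1 s3)) (nadj 0 2 (smeIff (flipIff s0) (flipIff s2))) (by decide) (by decide))
    · exact Or.inl (embC4 G 1 0 4 2
        (adj 1 0 (by decide) (by decide) (by decide) (nIff s1 (flipIff s0)))
        (adj 0 4 (by decide) (by decide) (by decide) (nIff' (flipIff s0) Iff.rfl))
        (adj 4 2 (by decide) (by decide) (by decide) (nIff Iff.rfl (flipIff s2)))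
        (adj 2 1 (by decide) (by decide) (by decide) (nIff' (flipIff s2) s1))
        (nadj 1 4 (smeIff s1 Iff.rfl)) (nadj 0 2 (smeIff (flipIff s0) (flipIff s2))) (by decide) (by decide))
    · exact Or.inl (embC4 G 2 0 3 1
        (adj 2 0 (by decide) (by decide) (by decide) (nIff s2 (flipIff s0)))
        (adj 0 3 (by decide) (by decide) (by decide) (nIff' (flipIff s0) s3))
        (adj 3 1 (by decide) (by decide) (by decide) (nIff s3 (flipIff s1)))
        (adj 1 2 (by decide) (by decide) (by decide) (nIff' (flipIff s1) s2))
        (nadj 2 3 (smeIff s2 s3)) (nadj 0 1 (smeIff (flipIff s0) (flipIff s1))) (by decide) (by decide))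
    · exact Or.inl (embC4 G 2 0 4 1
        (adj 2 0 (by decide) (by decide) (by decide) (nIff s2 (flipIff s0)))
        (adj 0 4 (by decide) (by decide) (by decide) (nIff' (flipIff s0) Iff.rfl))
        (adj 4 1 (by decide) (by decide) (by decide) (nIff Iff.rfl (flipIff s1)))
        (adj 1 2 (by decide) (by decide) (by decide) (nIff' (flipIff s1) s2))
        (nadj 2 4 (smeIff s2 Iff.rfl)) (nadj 0 1 (smeIff (flipIff s0) (flipIff s1))) (by decide) (by decide))
    · exact Or.inl (embC4 G 3 0 4 1
        (adj 3 0 (by decide) (by decide) (by decide) (nIff s3 (flipIff s0)))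
        (adj 0 4 (by decide) (by decide) (by decide) (nIff' (flipIff s0) Iff.rfl))
        (adj 4 1 (by decide) (by decide) (by decide) (nIff Iff.rfl (flipIff s1)))
        (adj 1 3 (by decide) (by decide) (by decide) (nIff' (flipIff s1) s3))
        (nadj 3 4 (smeIff s3 Iff.rfl)) (nadj 0 1 (smeIff (flipIff s0) (flipIff s1))) (by decide) (by decide))
    · exact Or.inr (embK14 G 4 0 1 2 3
        (adj 4 0 (by decide) (by decide) (by decide) (nIff Iff.rfl (flipIff s0)))
        (adj 4 1 (by decide) (by decide) (by decide) (nIff Iff.rfl (flipIff s1)))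
        (adj 4 2 (by decide) (by decide) (by decide) (nIff Iff.rfl (flipIff s2)))
        (adj 4 3 (by decide) (by decide) (by decide) (nIff Iff.rfl (flipIff s3)))
        (nadj 0 1 (smeIff (flipIff s0) (flipIff s1)))
        (nadj 0 2 (smeIff (flipIff s0) (flipIff s2)))
        (nadj 0 3 (smeIff (flipIff s0) (flipIff s3)))
        (nadj 1 2 (smeIff (flipIff s1) (flipIff s2)))
        (nadj 1 3 (smeIff (flipIff s1) (flipIff s3)))
        (nadj 2 3 (smeIff (flipIff s2) (flipIff s3)))
        (by decide) (by decide) (by decide) (by decide) (by decide) (by decide))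
  refine ⟨key, ?_⟩
  rcases key with hk | hk
  · exact hk.elim fun f => not_inClassS_of_C4 f
  · exact hk.elim fun f => not_inClassS_of_K14 f
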